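/- Let X be a real Banach space equipped with a uniformly continuous duality selection map J with modulus of continuity ω. Let E ⊆ X, (A_n) a sequence of mappings A_n : E → X, ψ : [0,∞) → [0,∞) nondecreasing, positive on (0,∞), with ψ(0) = 0, and q ∈ X. Suppose σ : (0,∞) × (0,∞) → ℕ is such that for all δ, b > 0, all n ≥ σ(δ,b), and all x ∈ E with ‖x − q‖ ≤ b: |⟨A_n x − q, J(x − q)⟩| ≤ ‖x − q‖² − ψ(‖x − q‖) + δ. Let (x_n) be a sequence in E with x_{n+1} = (1 − α_n)x_n + α_n A_n x_n, where (α_n) is a sequence in (0, α] with α_n → 0 with rate of convergence f and ∑_{n=0}^∞ α_n = ∞ with rate of divergence r. Suppose c₁, c₂ > 0 satisfy ‖x_n − q‖ ≤ c₁, ‖x_n − q‖² ≤ c₁, and ‖A_n x_n − x_n‖ ≤ c₂ for all n. Then for every ε > 0 and every n ≥ Φ(ε) := r(N((1/2)·min{2ψ(ε/√2), ε²/α}), 2∫_{ε²/2}^{c₁} dt/(2ψ(√t))) + 1, where N(δ) := max{σ(δ/4, c₁), f((1/c₂)·ω(c₁, δ/(4c₂)))}, we have ‖x_n − q‖ ≤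 ε. -/

import Mathlib

set_option maxHeartbeats 1000000 in

/-- Convergence with rate of the Mann iteration for a sequence of mappings
which is quasi asymptotically d-weakly contractive w.r.t. q, in a Banach space with a
uniformly continuous duality selection map J with modulus ω. -/
theorem stmt_12 {X : Type*} [NormedAddCommGroup X] [NormedSpace ℝ X] [CompleteSpace X]
    (J : X → StrongDual ℝ X) (ω : ℝ → ℝ → ℝ)
    (hJ : ∀ x : X, J x x = ‖x‖ ^ 2 ∧ ‖J x‖ = ‖x‖)
    (hωpos : ∀ b ε : ℝ, 0 < b → 0 < ε → 0 < ω b ε)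
    (hω : ∀ b ε : ℝ, 0 < b → 0 < ε → ∀ x y : X, ‖x‖ ≤ b → ‖y‖ ≤ b →
      ‖x - y‖ ≤ ω b ε → ‖J x - J y‖ ≤ ε)
    (E : Set X) (A : ℕ → X → X) (ψ : ℝ → ℝ) (q : X) (σ : ℝ → ℝ → ℕ)
    (a : ℕ → ℝ) (α : ℝ) (f : ℝ → ℕ) (r : ℕ → ℝ → ℕ) (c₁ c₂ : ℝ) (x : ℕ → X)
    (hψmono : ∀ s t : ℝ, 0 ≤ s → s ≤ t → ψ s ≤ ψ t)
    (hψpos : ∀ t : ℝ, 0 < t → 0 < ψ t) (hψ0 : ψ 0 = 0)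
    (hσ : ∀ δ b : ℝ, 0 < δ → 0 < b → ∀ n, σ δ b ≤ n → ∀ y ∈ E, ‖y - q‖ ≤ b →
      |J (y - q) (A n y - q)| ≤ ‖y - q‖ ^ 2 - ψ ‖y - q‖ + δ)
    (hxE : ∀ n, x n ∈ E)
    (hiter : ∀ n, x (n + 1) = (1 - a n) • x n + a n • A n (x n))
    (ha : ∀ n, 0 < a n) (hale : ∀ n, a n ≤ α)
    (hf : ∀ ε : ℝ, 0 < ε → ∀ n, f ε ≤ n → a n ≤ ε)
    (hr : ∀ (M : ℕ) (y : ℝ), 0 < y →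
      M ≤ r M y ∧ y < ∑ n ∈ Finset.Icc M (r M y), a n)
    (hc₁ : 0 < c₁) (hc₁b : ∀ n, ‖x n - q‖ ≤ c₁) (hc₁b' : ∀ n, ‖x n - q‖ ^ 2 ≤ c₁)
    (hc₂ : 0 < c₂) (hc₂b : ∀ n, ‖A n (x n) - x n‖ ≤ c₂)
    (ε : ℝ) (hε : 0 < ε) (n : ℕ)
    (hn : r (max (σ ((1 / 2) * min (2 * ψ (ε / Real.sqrt 2)) (ε ^ 2 / α) / 4) c₁)
            (f ((1 / c₂) * ω c₁ ((1 / 2) * min (2 * ψ (ε / Real.sqrt 2)) (ε ^ 2 / α) / (4 * c₂)))))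
        (2 * ∫ t in (ε ^ 2 / 2)..c₁, 1 / (2 * ψ (Real.sqrt t))) + 1 ≤ n) :
    ‖x n - q‖ ≤ ε := by
  by_cases hcase : c₁ ≤ ε ^ 2 / 2
  · nlinarith [hc₁b' n, norm_nonneg (x n - q)]
  push_neg at hcase
  have hα : 0 < α := lt_of_lt_of_le (ha 0) (hale 0)
  set D : ℝ := (1 / 2) * min (2 * ψ (ε / Real.sqrt 2)) (ε ^ 2 / α) with hD
  have hεs : 0 < ε / Real.sqrt 2 := by positivity
  have hεs2 : (ε / Real.sqrt 2) ^ 2 = ε ^ 2 / 2 := by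
    rw [div_pow, Real.sq_sqrt (by norm_num : (2:ℝ) ≥ 0)]
  have hψε : 0 < ψ (ε / Real.sqrt 2) := hψpos _ hεs
  have hDpos : 0 < D := by
    rw [hD]
    apply mul_pos (by norm_num)
    exact lt_min (by positivity) (by positivity)
  have hD1 : D ≤ ψ (ε / Real.sqrt 2) := by
    have := min_le_left (2 * ψ (ε / Real.sqrt 2)) (ε ^ 2 / α)
    rw [hD]; linarith
  have hD2 : α * D ≤ ε ^ 2 / 2 := by
    have h1 := min_le_right (2 * ψ (ε / Real.sqrt 2)) (ε ^ 2 / α)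
    have h2 : D ≤ (1/2) * (ε ^ 2 / α) := by
      rw [hD]
      have : (0:ℝ) < (1:ℝ)/2 := by norm_num
      nlinarith
    calc α * D ≤ α * ((1/2) * (ε ^ 2 / α)) := by nlinarith
      _ = ε ^ 2 / 2 := by field_simp
  set N : ℕ := max (σ (D / 4) c₁) (f ((1 / c₂) * ω c₁ (D / (4 * c₂)))) with hN
  set g : ℝ → ℝ := fun t => 1 / (2 * ψ (Real.sqrt t)) with hg
  set K : ℝ := 2 * ∫ t in (ε ^ 2 / 2)..c₁, g t with hK
  set R : ℕ := r N K with hR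
  -- basic facts
  have hψnn : ∀ t : ℝ, 0 ≤ t → 0 ≤ ψ t := by
    intro t ht
    have := hψmono 0 t le_rfl ht
    rw [hψ0] at this; exact this
  have hiter' : ∀ m, x (m + 1) - q = (x m - q) + a m • (A m (x m) - x m) := by
    intro m; rw [hiter m]; module
  -- key recurrence
  have key : ∀ m, N ≤ m →
      ‖x (m+1) - q‖ ^ 2 ≤ ‖x m - q‖ ^ 2 - 2 * a m * ψ ‖x m - q‖ + a m * D := by
    intro m hm
    have hσm : σ (D / 4) c₁ ≤ m := le_trans (le_max_left _ _) hm
    have hfm : f ((1 / c₂) * ω c₁ (D / (4 * c₂))) ≤ m := le_trans (le_max_right _ _) hm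
    have hω4 : 0 < ω c₁ (D / (4 * c₂)) := hωpos _ _ hc₁ (by positivity)
    have ham : a m ≤ (1 / c₂) * ω c₁ (D / (4 * c₂)) := hf _ (by positivity) m hfm
    have hJd : ‖J (x (m+1) - q) - J (x m - q)‖ ≤ D / (4 * c₂) := by
      apply hω c₁ (D / (4 * c₂)) hc₁ (by positivity) _ _ (hc₁b (m+1)) (hc₁b m)
      have hdiff : (x (m+1) - q) - (x m - q) = a m • (A m (x m) - x m) := by
        rw [hiter' m]; abel
      rw [hdiff, norm_smul, Real.norm_eq_abs, abs_of_pos (ha m)]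
      calc a m * ‖A m (x m) - x m‖
          ≤ ((1 / c₂) * ω c₁ (D / (4 * c₂))) * c₂ :=
            mul_le_mul ham (hc₂b m) (norm_nonneg _) (by positivity)
        _ = ω c₁ (D / (4 * c₂)) := by field_simp
    have e0 : ‖x (m+1) - q‖ ^ 2 =
        J (x (m+1) - q) ((x m - q) + a m • (A m (x m) - x m)) := by
      rw [← hiter' m]
      exact ((hJ (x (m+1) - q)).1).symm
    have e1 : ‖x (m+1) - q‖ ^ 2 =
        J (x (m+1) - q) (x m - q) + a m * J (x (m+1) - q) (A m (x m) - x m) := by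
      rw [e0, map_add, map_smul, smul_eq_mul]
    have e2 : J (x (m+1) - q) (x m - q) ≤ (‖x (m+1) - q‖ ^ 2 + ‖x m - q‖ ^ 2) / 2 := by
      have h1 : ‖J (x (m+1) - q) (x m - q)‖ ≤ ‖J (x (m+1) - q)‖ * ‖x m - q‖ :=
        (J (x (m+1) - q)).le_opNorm _
      rw [Real.norm_eq_abs, (hJ _).2] at h1
      have h2 := le_abs_self (J (x (m+1) - q) (x m - q))
      nlinarith [norm_nonneg (x (m+1) - q), norm_nonneg (x m - q),
        sq_nonneg (‖x (m+1) - q‖ - ‖x m - q‖)]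
    have e3 : J (x (m+1) - q) (A m (x m) - x m) ≤
        J (x m - q) (A m (x m) - x m) + D / 4 := by
      have h1 : ‖(J (x (m+1) - q) - J (x m - q)) (A m (x m) - x m)‖ ≤
          ‖J (x (m+1) - q) - J (x m - q)‖ * ‖A m (x m) - x m‖ :=
        (J (x (m+1) - q) - J (x m - q)).le_opNorm _
      rw [ContinuousLinearMap.sub_apply, Real.norm_eq_abs] at h1
      have h2 : ‖J (x (m+1) - q) - J (x m - q)‖ * ‖A m (x m) - x m‖ ≤ (D / (4 * c₂)) * c₂ :=
        mul_le_mul hJd (hc₂b m) (norm_nonneg _) (by positivity)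
      have h3 : (D / (4 * c₂)) * c₂ = D / 4 := by field_simp
      have h4 := le_abs_self
        (J (x (m+1) - q) (A m (x m) - x m) - J (x m - q) (A m (x m) - x m))
      linarith
    have e4 : J (x m - q) (A m (x m) - x m) =
        J (x m - q) (A m (x m) - q) - ‖x m - q‖ ^ 2 := by
      have h : A m (x m) - x m = (A m (x m) - q) - (x m - q) := by abel
      rw [h, map_sub, (hJ _).1]
    have e5 := hσ (D / 4) c₁ (by positivity) hc₁ m hσm (x m) (hxE m) (hc₁b m)
    have e5' := le_trans (le_abs_self _) e5
    have e6 : J (x (m+1) - q) (A m (x m) - x m) ≤ D / 2 - ψ ‖x m - q‖ := by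
      rw [e4] at e3; linarith
    have e7 : a m * J (x (m+1) - q) (A m (x m) - x m) ≤
        a m * (D / 2 - ψ ‖x m - q‖) :=
      mul_le_mul_of_nonneg_left e6 (le_of_lt (ha m))
    have e8 : a m * (D / 2 - ψ ‖x m - q‖) = a m * D / 2 - a m * ψ ‖x m - q‖ := by ring
    have e9 : 2 * a m * ψ ‖x m - q‖ = 2 * (a m * ψ ‖x m - q‖) := by ring
    rw [e8] at e7
    rw [e9]
    linarith [e1, e2, e7]
  -- ψ lower bound from b > ε²/2
  have hlow : ∀ m : ℕ, ε ^ 2 / 2 < ‖x m - q‖ ^ 2 →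
      ψ (ε / Real.sqrt 2) ≤ ψ ‖x m - q‖ := by
    intro m hm
    apply hψmono _ _ (le_of_lt hεs)
    nlinarith [norm_nonneg (x m - q), hεs]
  -- propagation step
  have step2 : ∀ m, N ≤ m → ‖x m - q‖ ^ 2 ≤ ε ^ 2 → ‖x (m+1) - q‖ ^ 2 ≤ ε ^ 2 := by
    intro m hm hbm
    have hk := key m hm
    by_cases hc : ‖x m - q‖ ^ 2 ≤ ε ^ 2 / 2
    · have hψnn' : 0 ≤ ψ ‖x m - q‖ := hψnn _ (norm_nonneg _)
      have h1 : a m * D ≤ α * D := mul_le_mul_of_nonneg_right (hale m) (le_of_lt hDpos)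
      nlinarith [mul_nonneg (le_of_lt (ha m)) hψnn']
    · push_neg at hc
      have h1 : D ≤ ψ ‖x m - q‖ := le_trans hD1 (hlow m hc)
      have h2 : a m * D ≤ a m * ψ ‖x m - q‖ :=
        mul_le_mul_of_nonneg_left h1 (le_of_lt (ha m))
      nlinarith [mul_nonneg (le_of_lt (ha m)) (le_trans (le_of_lt hDpos) h1)]
  have prop : ∀ m, N ≤ m → ‖x m - q‖ ^ 2 ≤ ε ^ 2 / 2 →
      ∀ k, m ≤ k → ‖x k - q‖ ^ 2 ≤ ε ^ 2 := by
    intro m hm hbm k hk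
    induction k, hk using Nat.le_induction with
    | base => nlinarith [sq_nonneg ε]
    | succ k hk ih => exact step2 k (le_trans hm hk) ih
  -- integrability setup
  have hganti : AntitoneOn g (Set.Ici (ε ^ 2 / 2)) := by
    intro s hs t ht hst
    simp only [Set.mem_Ici] at hs ht
    have h0 : 0 < ε ^ 2 / 2 := by positivity
    have hψs : 0 < ψ (Real.sqrt s) := hψpos _ (Real.sqrt_pos.mpr (by linarith))
    have hmono : ψ (Real.sqrt s) ≤ ψ (Real.sqrt t) :=
      hψmono _ _ (Real.sqrt_nonneg _) (Real.sqrt_le_sqrt hst)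
    simp only [hg]
    apply one_div_le_one_div_of_le (by linarith) (by linarith)
  have hgint : ∀ p p' : ℝ, ε ^ 2 / 2 ≤ p → ε ^ 2 / 2 ≤ p' →
      IntervalIntegrable g MeasureTheory.volume p p' := by
    intro p p' hp hp'
    apply AntitoneOn.intervalIntegrable
    apply hganti.mono
    intro t ht
    simp only [Set.mem_uIcc] at ht
    simp only [Set.mem_Ici]
    rcases ht with ⟨h1, _⟩ | ⟨h1, _⟩ <;> linarith
  have hgnn : ∀ t : ℝ, 0 ≤ t → 0 ≤ g t := by
    intro t ht
    have h1 : 0 ≤ ψ (Real.sqrt t) := hψnn _ (Real.sqrt_nonneg _)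
    simp only [hg]
    apply one_div_nonneg.mpr; linarith
  have hKpos : 0 < K := by
    have hint : IntervalIntegrable g MeasureTheory.volume (ε ^ 2 / 2) c₁ :=
      hgint _ _ le_rfl (le_of_lt hcase)
    have hpos : 0 < ∫ t in (ε ^ 2 / 2)..c₁, g t := by
      apply intervalIntegral.intervalIntegral_pos_of_pos_on hint _ hcase
      intro t ht
      have h0 : 0 < ε ^ 2 / 2 := by positivity
      have ht0 : 0 < t := lt_trans h0 ht.1
      have hψt : 0 < ψ (Real.sqrt t) := hψpos _ (Real.sqrt_pos.mpr ht0)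
      simp only [hg]
      positivity
    rw [hK]; linarith
  obtain ⟨hRN, hRsum⟩ := hr N K hKpos
  -- claim 1: some index in [N, R+1] has small value
  have claim1 : ∃ m, N ≤ m ∧ m ≤ R + 1 ∧ ‖x m - q‖ ^ 2 ≤ ε ^ 2 / 2 := by
    by_contra hcon
    push_neg at hcon
    have hmem : ∀ k, N ≤ k → k ≤ R + 1 → ε ^ 2 / 2 < ‖x k - q‖ ^ 2 := by
      intro k h1 h2; exact hcon k h1 h2
    have main : ∀ k, N ≤ k → k ≤ R + 1 →
        (1/2) * ∑ i ∈ Finset.Ico N k, a i ≤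
          ∫ t in (‖x k - q‖ ^ 2)..(‖x N - q‖ ^ 2), g t := by
      intro k hk
      induction k, hk using Nat.le_induction with
      | base =>
        intro _
        simp [intervalIntegral.integral_same]
      | succ k hk ih =>
        intro hk1
        have hkR : k ≤ R + 1 := by omega
        have IH := ih hkR
        have hbk := hmem k hk hkR
        have hbk1 := hmem (k+1) (by omega) hk1
        have hbN := hmem N le_rfl (by omega)
        have hkey := key k hk
        have hψk : D ≤ ψ ‖x k - q‖ := le_trans hD1 (hlow k hbk)
        have hψkpos : 0 < ψ ‖x k - q‖ := lt_of_lt_of_le hDpos hψk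
        have h2 : a k * D ≤ a k * ψ ‖x k - q‖ :=
          mul_le_mul_of_nonneg_left hψk (le_of_lt (ha k))
        have hdec : a k * ψ ‖x k - q‖ ≤ ‖x k - q‖ ^ 2 - ‖x (k+1) - q‖ ^ 2 := by
          nlinarith
        have hle : ‖x (k+1) - q‖ ^ 2 ≤ ‖x k - q‖ ^ 2 := by
          nlinarith [mul_pos (ha k) hψkpos]
        have hstep : a k / 2 ≤ ∫ t in (‖x (k+1) - q‖ ^ 2)..(‖x k - q‖ ^ 2), g t := by
          have hconst : ∀ t ∈ Set.Icc (‖x (k+1) - q‖ ^ 2) (‖x k - q‖ ^ 2),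
              (fun _ : ℝ => 1 / (2 * ψ ‖x k - q‖)) t ≤ g t := by
            intro t ht
            have ht1 : ε ^ 2 / 2 < t := lt_of_lt_of_le hbk1 ht.1
            have ht0 : 0 < t := lt_trans (by positivity : (0:ℝ) < ε ^ 2 / 2) ht1
            have hsq : Real.sqrt t ≤ ‖x k - q‖ := by
              rw [show ‖x k - q‖ = Real.sqrt (‖x k - q‖ ^ 2) from
                (Real.sqrt_sq (norm_nonneg _)).symm]
              exact Real.sqrt_le_sqrt ht.2
            have hψt : 0 < ψ (Real.sqrt t) := hψpos _ (Real.sqrt_pos.mpr ht0)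
            have hψle : ψ (Real.sqrt t) ≤ ψ ‖x k - q‖ :=
              hψmono _ _ (Real.sqrt_nonneg _) hsq
            simp only [hg]
            apply one_div_le_one_div_of_le (by linarith) (by linarith)
          have hint1 : IntervalIntegrable g MeasureTheory.volume
              (‖x (k+1) - q‖ ^ 2) (‖x k - q‖ ^ 2) :=
            hgint _ _ (le_of_lt hbk1) (le_of_lt hbk)
          have hmon := intervalIntegral.integral_mono_on hle
            (intervalIntegrable_const) hint1 hconst
          rw [intervalIntegral.integral_const, smul_eq_mul] at hmon
          have hlb : a k / 2 ≤
              (‖x k - q‖ ^ 2 - ‖x (k+1) - q‖ ^ 2) * (1 / (2 * ψ ‖x k - q‖)) := by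
            rw [mul_one_div, le_div_iff₀ (by positivity)]
            nlinarith
          linarith
        have hadj := intervalIntegral.integral_add_adjacent_intervals
          (hgint _ _ (le_of_lt hbk1) (le_of_lt hbk))
          (hgint _ _ (le_of_lt hbk) (le_of_lt hbN))
        rw [Finset.sum_Ico_succ_top hk]
        linarith
    have hfin := main (R+1) (by omega) le_rfl
    have hsum : K < ∑ i ∈ Finset.Ico N (R+1), a i := by
      rw [Finset.Ico_add_one_right_eq_Icc]; exact hRsum
    have hbR1 := hmem (R+1) (by omega) le_rfl
    have hbN := hmem N le_rfl (by omega)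
    have h0' : (0:ℝ) ≤ ε ^ 2 / 2 := by positivity
    have h1 : (0:ℝ) ≤ ∫ t in (ε ^ 2 / 2)..(‖x (R+1) - q‖ ^ 2), g t :=
      intervalIntegral.integral_nonneg (le_of_lt hbR1)
        (fun u hu => hgnn u (le_trans h0' hu.1))
    have h2 : (0:ℝ) ≤ ∫ t in (‖x N - q‖ ^ 2)..c₁, g t :=
      intervalIntegral.integral_nonneg (hc₁b' N)
        (fun u hu => hgnn u (le_trans (sq_nonneg _) hu.1))
    have hadj1 := intervalIntegral.integral_add_adjacent_intervals
      (hgint (ε ^ 2 / 2) _ le_rfl (le_of_lt hbR1))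
      (hgint _ _ (le_of_lt hbR1) (le_of_lt hbN))
    have hadj2 := intervalIntegral.integral_add_adjacent_intervals
      (hgint (ε ^ 2 / 2) _ le_rfl (le_of_lt hbN))
      (hgint _ c₁ (le_of_lt hbN) (le_of_lt hcase))
    rw [hK] at hsum
    linarith
  obtain ⟨m, hmN, hmR, hmb⟩ := claim1
  have hn' : R + 1 ≤ n := hn
  have hbn : ‖x n - q‖ ^ 2 ≤ ε ^ 2 := prop m hmN hmb n (le_trans hmR hn')
  nlinarith [norm_nonneg (x n - q)]
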